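/- arXiv:2109.09728 — 5 statements merged into one kernel-verified Lean document; each statement's English description precedes it below -/
import Mathlib

section
/- Let α₁, α₂, α₃ ∈ ℝ with α₁α₂ + α₂α₃ + α₃α₁ ≤ 0, and let A = Circ(α₁, α₂, α₃) be the 3×3 circulant matrix with first row (α₁, α₂, α₃). Then the spectral norm of A equals √(α₁² + α₂² + α₃² − (α₁α₂ + α₂α₃ + α₃α₁)). -/
open scoped BigOperators ENNReal

/-- The `ℓ^p` norm of a vector in `ℝⁿ`, for `p ∈ [1, ∞]`. -/
noncomputable def vecPNorm {n : ℕ} (p : ℝ≥0∞) (x : Fin n → ℝ) : ℝ :=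
  if p = ∞ then ⨆ i, |x i| else (∑ i, |x i| ^ p.toReal) ^ (1 / p.toReal)

/-- The operator norm of a matrix acting on `(ℝⁿ, ‖·‖_p)`,
    i.e. `sup_{x ≠ 0} ‖Ax‖_p / ‖x‖_p`. -/
noncomputable def matPNorm {n : ℕ} (p : ℝ≥0∞) (A : Matrix (Fin n) (Fin n) ℝ) : ℝ :=
  sSup {r : ℝ | ∃ x : Fin n → ℝ, x ≠ 0 ∧ r = vecPNorm p (A.mulVec x) / vecPNorm p x}

/-- The circulant matrix `A(n, a, b)` with `a` on the diagonal and `b` elsewhere. -/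
def circA (n : ℕ) (a b : ℝ) : Matrix (Fin n) (Fin n) ℝ :=
  Matrix.of fun i j => if i = j then a else b

lemma vecPNorm_two {n : ℕ} (x : Fin n → ℝ) :
    vecPNorm 2 x = Real.sqrt (∑ i, x i ^ 2) := by
  have h2 : ((2:ℝ≥0∞)).toReal = 2 := by simp
  rw [vecPNorm, if_neg (by simp), h2]
  rw [Real.sqrt_eq_rpow]
  congr 1
  refine Finset.sum_congr rfl fun i _ => ?_
  rw [show ((2:ℝ) = ((2:ℕ):ℝ)) by norm_num, Real.rpow_natCast, sq_abs]

theorem stmt_7 (α₁ α₂ α₃ : ℝ) (h : α₁ * α₂ + α₂ * α₃ + α₃ * α₁ ≤ 0) :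
    matPNorm 2 !![α₁, α₂, α₃; α₃, α₁, α₂; α₂, α₃, α₁] =
      Real.sqrt (α₁ ^ 2 + α₂ ^ 2 + α₃ ^ 2 - (α₁ * α₂ + α₂ * α₃ + α₃ * α₁)) := by
  set A := !![α₁, α₂, α₃; α₃, α₁, α₂; α₂, α₃, α₁] with hA
  set q := α₁ ^ 2 + α₂ ^ 2 + α₃ ^ 2 with hq
  set p := α₁ * α₂ + α₂ * α₃ + α₃ * α₁ with hp
  have hqp : 0 ≤ q - p := by nlinarith [sq_nonneg (α₁ - α₂), sq_nonneg (α₂ - α₃), sq_nonneg (α₃ - α₁)]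
  set M := Real.sqrt (q - p) with hM
  have hnorm : ∀ x : Fin 3 → ℝ,
      vecPNorm 2 (A.mulVec x) = Real.sqrt ((q - p) * (x 0 ^ 2 + x 1 ^ 2 + x 2 ^ 2) + p * (x 0 + x 1 + x 2) ^ 2) := by
    intro x
    rw [vecPNorm_two]
    congr 1
    simp [hA, Matrix.mulVec, dotProduct, Fin.sum_univ_three, Matrix.vecHead, Matrix.vecTail]
    ring
  have hvec : ∀ x : Fin 3 → ℝ, vecPNorm 2 x = Real.sqrt (x 0 ^ 2 + x 1 ^ 2 + x 2 ^ 2) := by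
    intro x
    rw [vecPNorm_two, Fin.sum_univ_three]
  have hG : IsGreatest {r : ℝ | ∃ x : Fin 3 → ℝ, x ≠ 0 ∧ r = vecPNorm 2 (A.mulVec x) / vecPNorm 2 x} M := by
    constructor
    · refine ⟨![1, -1, 0], ?_, ?_⟩
      · intro hc
        have := congrFun hc 0
        norm_num at this
      · rw [hnorm, hvec]
        have e1 : ((q - p) * ((![(1:ℝ), -1, 0]) 0 ^ 2 + (![(1:ℝ), -1, 0]) 1 ^ 2 + (![(1:ℝ), -1, 0]) 2 ^ 2)
            + p * ((![(1:ℝ), -1, 0]) 0 + (![(1:ℝ), -1, 0]) 1 + (![(1:ℝ), -1, 0]) 2) ^ 2) = 2 * (q - p) := by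
          norm_num [Matrix.cons_val_two, Matrix.vecHead, Matrix.vecTail]; ring
        have e2 : ((![(1:ℝ), -1, 0]) 0 ^ 2 + (![(1:ℝ), -1, 0]) 1 ^ 2 + (![(1:ℝ), -1, 0]) 2 ^ 2) = (2:ℝ) := by
          norm_num [Matrix.cons_val_two, Matrix.vecHead, Matrix.vecTail]
        rw [e1, e2, Real.sqrt_mul (by norm_num : (0:ℝ) ≤ 2), ← hM,
          mul_div_cancel_left₀ _ (by positivity : Real.sqrt 2 ≠ 0)]
    · rintro r ⟨x, hx, rfl⟩
      rw [hnorm, hvec]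
      set n2 := x 0 ^ 2 + x 1 ^ 2 + x 2 ^ 2 with hn2
      have hn2pos : 0 < n2 := by
        rcases lt_or_eq_of_le (by positivity : (0:ℝ) ≤ n2) with h' | h'
        · exact h'
        · exfalso
          apply hx
          have h0 : x 0 = 0 := by
            have : x 0 ^ 2 = 0 := le_antisymm (by nlinarith [sq_nonneg (x 1), sq_nonneg (x 2)]) (sq_nonneg _)
            exact (pow_eq_zero_iff two_ne_zero).mp this
          have h1 : x 1 = 0 := by
            have : x 1 ^ 2 = 0 := le_antisymm (by nlinarith [sq_nonneg (x 0), sq_nonneg (x 2)]) (sq_nonneg _)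
            exact (pow_eq_zero_iff two_ne_zero).mp this
          have h2 : x 2 = 0 := by
            have : x 2 ^ 2 = 0 := le_antisymm (by nlinarith [sq_nonneg (x 0), sq_nonneg (x 1)]) (sq_nonneg _)
            exact (pow_eq_zero_iff two_ne_zero).mp this
          funext i
          simp only [Pi.zero_apply]
          fin_cases i
          · exact h0
          · exact h1
          · exact h2
      rw [div_le_iff₀ (Real.sqrt_pos.mpr hn2pos)]
      rw [hM, ← Real.sqrt_mul hqp]
      apply Real.sqrt_le_sqrt
      nlinarith [mul_nonpos_of_nonpos_of_nonneg h (sq_nonneg (x 0 + x 1 + x 2))]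
  rw [matPNorm]
  exact hG.csSup_eq
end

section
/- Let a, b ≥ 0, n ≥ 1, and let A = A(n,-a,b) be the matrix with -a on the diagonal and b elsewhere. For every p with 1 < p < ∞, the induced p-norm of A satisfies ‖A‖_p ≥ a + b. -/
open scoped BigOperators ENNReal

theorem stmt_12 (n : ℕ) (hn : 2 ≤ n) (a b : ℝ) (ha : 0 ≤ a) (hb : 0 ≤ b)
    (p : ℝ) (hp : 1 < p) :
    a + b ≤ matPNorm (ENNReal.ofReal p) (circA n (-a) b) := by
  have hp0 : (0:ℝ) < p := by linarith
  have hpne : p ≠ 0 := ne_of_gt hp0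
  have hqt : (ENNReal.ofReal p).toReal = p := ENNReal.toReal_ofReal hp0.le
  have hqne : ENNReal.ofReal p ≠ ∞ := ENNReal.ofReal_ne_top
  have hvec : ∀ x : Fin n → ℝ,
      vecPNorm (ENNReal.ofReal p) x = (∑ i, |x i| ^ p) ^ (1/p) := by
    intro x; simp [vecPNorm, hqne, hqt]
  have hinv : p * (1/p) = 1 := by field_simp
  -- recover |y| from |y|^p
  have hrec : ∀ y : ℝ, (|y| ^ p) ^ (1/p) = |y| := by
    intro y
    rw [← Real.rpow_mul (abs_nonneg y), hinv, Real.rpow_one]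
  have hab : (0:ℝ) ≤ a + b := by linarith
  -- bounded above
  have hbdd : BddAbove {r : ℝ | ∃ x : Fin n → ℝ, x ≠ 0 ∧
      r = vecPNorm (ENNReal.ofReal p) ((circA n (-a) b).mulVec x)
        / vecPNorm (ENNReal.ofReal p) x} := by
    refine ⟨(n:ℝ) * ((n:ℝ) * (a+b)), ?_⟩
    rintro r ⟨x, hx, rfl⟩
    set N : ℝ := (∑ i, |x i| ^ p) ^ (1/p) with hN
    have hSpos : 0 < ∑ i, |x i| ^ p := by
      obtain ⟨i, hi⟩ := Function.ne_iff.mp hx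
      refine Finset.sum_pos' (fun j _ => Real.rpow_nonneg (abs_nonneg _) _) ⟨i, Finset.mem_univ i, ?_⟩
      exact Real.rpow_pos_of_pos (abs_pos.mpr hi) p
    have hNpos : 0 < N := Real.rpow_pos_of_pos hSpos _
    have hxle : ∀ j, |x j| ≤ N := by
      intro j
      rw [← hrec (x j), hN]
      exact Real.rpow_le_rpow (Real.rpow_nonneg (abs_nonneg _) _)
        (Finset.single_le_sum (fun i _ => Real.rpow_nonneg (abs_nonneg _) _) (Finset.mem_univ j))
        (by positivity)
    set K : ℝ := (n:ℝ) * (a+b) * N with hK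
    have hKnn : 0 ≤ K := by positivity
    have hAxle : ∀ i, |(circA n (-a) b).mulVec x i| ≤ K := by
      intro i
      rw [Matrix.mulVec, dotProduct]
      calc |∑ j, circA n (-a) b i j * x j| ≤ ∑ j, |circA n (-a) b i j * x j| :=
            Finset.abs_sum_le_sum_abs _ _
        _ ≤ ∑ _j : Fin n, (a+b) * N := by
            refine Finset.sum_le_sum fun j _ => ?_
            rw [abs_mul]
            have h1 : |circA n (-a) b i j| ≤ a + b := by
              by_cases h : i = j
              · simp only [circA, Matrix.of_apply, if_pos h, abs_neg, abs_of_nonneg ha]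
                linarith
              · simp only [circA, Matrix.of_apply, if_neg h, abs_of_nonneg hb]
                linarith
            exact mul_le_mul h1 (hxle j) (abs_nonneg _) hab
        _ = (n:ℝ) * ((a+b) * N) := by rw [Finset.sum_const]; simp [mul_assoc]
        _ = K := by ring
    have hn1 : (1:ℝ) ≤ (n:ℝ) := by exact_mod_cast Nat.one_le_of_lt hn
    have hnum : vecPNorm (ENNReal.ofReal p) ((circA n (-a) b).mulVec x)
        ≤ (n:ℝ) * ((n:ℝ) * (a+b)) * N := by
      rw [hvec]
      have h1 : ∑ i, |(circA n (-a) b).mulVec x i| ^ p ≤ (n:ℝ) * K ^ p := by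
        calc ∑ i, |(circA n (-a) b).mulVec x i| ^ p ≤ ∑ _i : Fin n, K ^ p :=
              Finset.sum_le_sum fun i _ =>
                Real.rpow_le_rpow (abs_nonneg _) (hAxle i) hp0.le
          _ = (n:ℝ) * K ^ p := by rw [Finset.sum_const]; simp
      calc (∑ i, |(circA n (-a) b).mulVec x i| ^ p) ^ (1/p)
          ≤ ((n:ℝ) * K ^ p) ^ (1/p) :=
            Real.rpow_le_rpow (Finset.sum_nonneg fun i _ => Real.rpow_nonneg (abs_nonneg _) _)
              h1 (by positivity)
        _ = (n:ℝ) ^ (1/p) * K := by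
            rw [Real.mul_rpow (by positivity) (Real.rpow_nonneg hKnn _),
              ← Real.rpow_mul hKnn, hinv, Real.rpow_one]
        _ ≤ (n:ℝ) * K := by
            have : (n:ℝ) ^ (1/p) ≤ (n:ℝ) ^ (1:ℝ) :=
              Real.rpow_le_rpow_of_exponent_le hn1 (by
                rw [div_le_one hp0]; linarith)
            rw [Real.rpow_one] at this
            exact mul_le_mul_of_nonneg_right this hKnn
        _ = (n:ℝ) * ((n:ℝ) * (a+b)) * N := by rw [hK]; ring
    rw [hvec x, ← hN, div_le_iff₀ hNpos]
    exact hnum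
  -- witness
  set i0 : Fin n := ⟨0, by omega⟩ with hi0
  set i1 : Fin n := ⟨1, by omega⟩ with hi1
  have hne01 : i0 ≠ i1 := by simp [hi0, hi1, Fin.ext_iff]
  set x : Fin n → ℝ := fun j => if j = i0 then 1 else if j = i1 then -1 else 0 with hxdef
  have hx0 : x ≠ 0 := by
    intro h
    have := congrFun h i0
    simp [hxdef] at this
  have hsum : ∑ j, x j = 0 := by
    have : ∀ j, x j = (if j = i0 then (1:ℝ) else 0) + (if j = i1 then (-1:ℝ) else 0) := by
      intro j
      by_cases h0 : j = i0
      · subst h0; simp [hxdef, hne01]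
      · by_cases h1 : j = i1 <;> simp [hxdef, h0, h1, Ne.symm hne01]
    rw [Finset.sum_congr rfl fun j _ => this j, Finset.sum_add_distrib]
    simp
  have hmul : ∀ i, (circA n (-a) b).mulVec x i = -(a+b) * x i := by
    intro i
    rw [Matrix.mulVec, dotProduct]
    have : ∀ j, circA n (-a) b i j * x j = (-(a+b)) * (if j = i then x j else 0) + b * x j := by
      intro j
      by_cases h : j = i
      · subst h; simp [circA]; ring
      · simp [circA, Ne.symm h, h]
    rw [Finset.sum_congr rfl fun j _ => this j, Finset.sum_add_distrib, ← Finset.mul_sum,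
      ← Finset.mul_sum, hsum, Finset.sum_ite_eq' Finset.univ i x]
    simp
  set S : ℝ := ∑ j, |x j| ^ p with hS
  have hSpos : 0 < S := by
    refine Finset.sum_pos' (fun j _ => Real.rpow_nonneg (abs_nonneg _) _)
      ⟨i0, Finset.mem_univ i0, ?_⟩
    have : x i0 = 1 := by simp [hxdef]
    rw [this, abs_one, Real.one_rpow]; exact one_pos
  have hratio : vecPNorm (ENNReal.ofReal p) ((circA n (-a) b).mulVec x)
      / vecPNorm (ENNReal.ofReal p) x = a + b := by
    rw [hvec, hvec]
    have h1 : ∑ i, |(circA n (-a) b).mulVec x i| ^ p = (a+b)^p * S := by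
      rw [hS, Finset.mul_sum]
      refine Finset.sum_congr rfl fun i _ => ?_
      rw [hmul i, abs_mul, abs_neg, abs_of_nonneg hab,
        Real.mul_rpow hab (abs_nonneg _)]
    rw [h1, Real.mul_rpow (Real.rpow_nonneg hab _) hSpos.le,
      ← Real.rpow_mul hab, hinv, Real.rpow_one, ← hS,
      mul_div_assoc, div_self (ne_of_gt (Real.rpow_pos_of_pos hSpos _)), mul_one]
  have hmem : a + b ∈ {r : ℝ | ∃ x : Fin n → ℝ, x ≠ 0 ∧
      r = vecPNorm (ENNReal.ofReal p) ((circA n (-a) b).mulVec x)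
        / vecPNorm (ENNReal.ofReal p) x} :=
    ⟨x, hx0, hratio.symm⟩
  exact le_csSup hbdd hmem
end

section
/- Let a, b ≥ 0 with (n−2)b ≤ 2a, and let A = A(n,-a,b) be the n×n matrix with -a on the diagonal and b elsewhere. For 2 ≤ p < ∞, the induced p-norm of A satisfies a + b ≤ ‖A‖_p ≤ n^{1/2 − 1/p}(a + b). -/
open scoped BigOperators ENNReal

/- Auxiliary lemmas -/

lemma aux_conv_sq (p : ℝ) (y : ℝ) : (y^2) ^ (p/2) = |y| ^ p := by
  rw [← sq_abs, ← Real.rpow_natCast |y| 2, ← Real.rpow_mul (abs_nonneg y)]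
  norm_num
  ring_nf

lemma aux_lp_le_l2 (n : ℕ) (p : ℝ) (hp : 2 ≤ p) (y : Fin n → ℝ) :
    (∑ i, |y i| ^ p) ^ (1/p) ≤ (∑ i, (y i)^2 : ℝ) ^ ((1:ℝ)/2) := by
  have hp0 : (0:ℝ) < p := by linarith
  set T : ℝ := ∑ i, (y i)^2 with hT
  have hT0 : 0 ≤ T := Finset.sum_nonneg fun i _ => sq_nonneg _
  have hr1 : (1:ℝ) ≤ p/2 := by linarith
  have key : ∑ i, |y i| ^ p ≤ T ^ (p/2) := by
    have h1 : ∀ i : Fin n, |y i| ^ p ≤ (y i)^2 * T ^ (p/2 - 1) := by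
      intro i
      rw [← aux_conv_sq p]
      have hle : (y i)^2 ≤ T := Finset.single_le_sum (f := fun i => (y i)^2)
        (fun i _ => sq_nonneg _) (Finset.mem_univ i)
      calc ((y i)^2) ^ (p/2) = ((y i)^2) ^ (1 + (p/2 - 1)) := by ring_nf
        _ = ((y i)^2) ^ (1:ℝ) * ((y i)^2) ^ (p/2 - 1) := by
            rw [Real.rpow_add' (sq_nonneg _)]; linarith
        _ ≤ (y i)^2 * T ^ (p/2 - 1) := by
            rw [Real.rpow_one]
            exact mul_le_mul_of_nonneg_left
              (Real.rpow_le_rpow (sq_nonneg _) hle (by linarith)) (sq_nonneg _)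
    calc ∑ i, |y i| ^ p ≤ ∑ i, (y i)^2 * T ^ (p/2 - 1) := Finset.sum_le_sum fun i _ => h1 i
      _ = T * T ^ (p/2 - 1) := by rw [← Finset.sum_mul]
      _ = T ^ (p/2) := by
          nth_rewrite 1 [← Real.rpow_one T]
          rw [← Real.rpow_add' hT0 (by norm_num; linarith)]
          norm_num
  calc (∑ i, |y i| ^ p) ^ (1/p) ≤ (T ^ (p/2)) ^ (1/p) :=
        Real.rpow_le_rpow (Finset.sum_nonneg fun i _ => Real.rpow_nonneg (abs_nonneg _) _)
          key (by positivity)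
    _ = T ^ ((1:ℝ)/2) := by
        rw [← Real.rpow_mul hT0]; congr 1; field_simp

lemma aux_l2_le_lp (n : ℕ) (hn : 0 < n) (p : ℝ) (hp : 2 ≤ p) (y : Fin n → ℝ) :
    (∑ i, (y i)^2 : ℝ) ^ ((1:ℝ)/2) ≤ (n:ℝ) ^ ((1:ℝ)/2 - 1/p) * (∑ i, |y i| ^ p) ^ (1/p) := by
  have hp0 : (0:ℝ) < p := by linarith
  have hc : (0:ℝ) < (n:ℝ) := by exact_mod_cast hn
  set T : ℝ := ∑ i, (y i)^2 with hTdef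
  set S : ℝ := ∑ i, |y i| ^ p with hSdef
  have hT0 : 0 ≤ T := Finset.sum_nonneg fun i _ => sq_nonneg _
  have hS0 : 0 ≤ S := Finset.sum_nonneg fun i _ => Real.rpow_nonneg (abs_nonneg _) _
  have hr1 : (1:ℝ) ≤ p/2 := by linarith
  have jensen := Real.rpow_arith_mean_le_arith_mean_rpow Finset.univ
      (fun _ : Fin n => 1/(n:ℝ)) (fun i => (y i)^2)
      (fun i _ => by positivity)
      (by rw [Finset.sum_const, Finset.card_univ, Fintype.card_fin, nsmul_eq_mul]; field_simp)
      (fun i _ => sq_nonneg _) hr1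
  simp only [aux_conv_sq p] at jensen
  have hL : ((1/(n:ℝ)) * T) ^ (p/2) = (1/(n:ℝ)) ^ (p/2) * T ^ (p/2) := by
    rw [Real.mul_rpow (by positivity) hT0]
  have key : T ^ (p/2) ≤ (n:ℝ) ^ (p/2 - 1) * S := by
    have h2 : (1/(n:ℝ)) ^ (p/2) * T ^ (p/2) ≤ (1/(n:ℝ)) * S := by
      calc (1/(n:ℝ)) ^ (p/2) * T ^ (p/2) = ((1/(n:ℝ)) * T) ^ (p/2) := hL.symm
        _ = (∑ i : Fin n, (1/(n:ℝ)) * (y i)^2) ^ (p/2) := by rw [hTdef, Finset.mul_sum]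
        _ ≤ ∑ i : Fin n, (1/(n:ℝ)) * |y i| ^ p := jensen
        _ = (1/(n:ℝ)) * S := by rw [hSdef, Finset.mul_sum]
    have h3 : (1/(n:ℝ)) ^ (p/2) = ((n:ℝ) ^ (p/2))⁻¹ := by
      rw [one_div, Real.inv_rpow hc.le]
    have hnp : (0:ℝ) < (n:ℝ) ^ (p/2) := Real.rpow_pos_of_pos hc _
    rw [h3] at h2
    have h4 : T ^ (p/2) ≤ (n:ℝ) ^ (p/2) * ((1/(n:ℝ)) * S) := by
      rw [← inv_mul_le_iff₀ hnp]
      exact h2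
    calc T ^ (p/2) ≤ (n:ℝ) ^ (p/2) * ((1/(n:ℝ)) * S) := h4
      _ = ((n:ℝ) ^ (p/2) * (n:ℝ)⁻¹) * S := by ring
      _ = (n:ℝ) ^ (p/2 - 1) * S := by
          rw [Real.rpow_sub hc, Real.rpow_one]
          ring
  calc T ^ ((1:ℝ)/2) = (T ^ (p/2)) ^ (1/p) := by
        rw [← Real.rpow_mul hT0]; congr 1; field_simp
    _ ≤ ((n:ℝ) ^ (p/2 - 1) * S) ^ (1/p) :=
        Real.rpow_le_rpow (Real.rpow_nonneg hT0 _) key (by positivity)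
    _ = (n:ℝ) ^ ((1:ℝ)/2 - 1/p) * S ^ (1/p) := by
        rw [Real.mul_rpow (Real.rpow_nonneg hc.le _) hS0, ← Real.rpow_mul hc.le]
        congr 2
        field_simp

lemma aux_mulVec_circA (n : ℕ) (a b : ℝ) (x : Fin n → ℝ) (i : Fin n) :
    (circA n (-a) b).mulVec x i = b * (∑ j, x j) - (a + b) * x i := by
  simp only [Matrix.mulVec, dotProduct, circA, Matrix.of_apply]
  have h : ∀ j : Fin n, (if i = j then -a else b) * x j
      = b * x j + (if j = i then -(a+b) * x j else 0) := by
    intro j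
    by_cases hij : i = j
    · subst hij; simp; ring
    · simp [hij, Ne.symm hij]
  rw [Finset.sum_congr rfl fun j _ => h j, Finset.sum_add_distrib,
    Finset.sum_ite_eq' Finset.univ i (fun j => -(a+b) * x j), ← Finset.mul_sum]
  simp
  ring

lemma aux_l2_bound (n : ℕ) (a b : ℝ) (hb : 0 ≤ b)
    (hcase : ((n : ℝ) - 2) * b ≤ 2 * a) (x : Fin n → ℝ) :
    ∑ i, ((circA n (-a) b).mulVec x i)^2 ≤ (a+b)^2 * ∑ i, (x i)^2 := by
  set s : ℝ := ∑ j, x j with hs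
  have hexp : ∑ i, ((circA n (-a) b).mulVec x i)^2
      = (n:ℝ) * (b*s)^2 - 2*b*(a+b)*s^2 + (a+b)^2 * ∑ i, (x i)^2 := by
    rw [Finset.sum_congr rfl fun i _ => by rw [aux_mulVec_circA]]
    have h : ∀ i : Fin n, (b * s - (a+b) * x i)^2
        = (b*s)^2 - (2*b*(a+b)*s) * x i + (a+b)^2 * (x i)^2 := fun i => by ring
    rw [Finset.sum_congr rfl fun i _ => h i]
    rw [Finset.sum_add_distrib, Finset.sum_sub_distrib, Finset.sum_const,
      Finset.card_univ, Fintype.card_fin, ← Finset.mul_sum, ← Finset.mul_sum, ← hs]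
    ring
  rw [hexp]
  nlinarith [sq_nonneg s, mul_nonneg hb (sq_nonneg s), sq_nonneg (b*s)]

theorem stmt_14 (n : ℕ) (hn : 2 ≤ n) (a b : ℝ) (ha : 0 ≤ a) (hb : 0 ≤ b)
    (hcase : ((n : ℝ) - 2) * b ≤ 2 * a) (p : ℝ) (hp : 2 ≤ p) :
    a + b ≤ matPNorm (ENNReal.ofReal p) (circA n (-a) b) ∧
      matPNorm (ENNReal.ofReal p) (circA n (-a) b) ≤
        (n : ℝ) ^ ((1 : ℝ) / 2 - 1 / p) * (a + b) := by
  have hp0 : (0:ℝ) < p := by linarith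
  have hab : (0:ℝ) ≤ a + b := by linarith
  have hn0 : 0 < n := by omega
  set A := circA n (-a) b with hA
  set P := ENNReal.ofReal p with hPdef
  set M : ℝ := (n : ℝ) ^ ((1 : ℝ) / 2 - 1 / p) * (a + b) with hM
  have hPne : P ≠ ⊤ := ENNReal.ofReal_ne_top
  have hPt : P.toReal = p := ENNReal.toReal_ofReal hp0.le
  have hvec : ∀ (y : Fin n → ℝ), vecPNorm P y = (∑ i, |y i| ^ p) ^ (1/p) := by
    intro y; rw [vecPNorm, if_neg hPne, hPt]
  have hpos : ∀ x : Fin n → ℝ, x ≠ 0 → 0 < vecPNorm P x := by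
    intro x hx
    rw [hvec]
    apply Real.rpow_pos_of_pos
    obtain ⟨i, hi⟩ := Function.ne_iff.mp hx
    have h1 : 0 < |x i| ^ p := Real.rpow_pos_of_pos (abs_pos.mpr hi) p
    exact lt_of_lt_of_le h1 (Finset.single_le_sum
      (fun j _ => Real.rpow_nonneg (abs_nonneg _) _) (Finset.mem_univ i))
  -- Upper bound for every vector
  have hbound : ∀ x : Fin n → ℝ, vecPNorm P (A.mulVec x) ≤ M * vecPNorm P x := by
    intro x
    rw [hvec, hvec]
    calc (∑ i, |A.mulVec x i| ^ p) ^ (1/p)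
        ≤ (∑ i, (A.mulVec x i)^2 : ℝ) ^ ((1:ℝ)/2) := aux_lp_le_l2 n p hp _
      _ ≤ ((a+b)^2 * ∑ i, (x i)^2) ^ ((1:ℝ)/2) :=
          Real.rpow_le_rpow (Finset.sum_nonneg fun i _ => sq_nonneg _)
            (aux_l2_bound n a b hb hcase x) (by norm_num)
      _ = (a+b) * (∑ i, (x i)^2 : ℝ) ^ ((1:ℝ)/2) := by
          rw [Real.mul_rpow (sq_nonneg _) (Finset.sum_nonneg fun i _ => sq_nonneg _)]
          congr 1
          rw [← Real.rpow_natCast (a+b) 2, ← Real.rpow_mul hab]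
          norm_num
      _ ≤ (a+b) * ((n:ℝ) ^ ((1:ℝ)/2 - 1/p) * (∑ i, |x i| ^ p) ^ (1/p)) :=
          mul_le_mul_of_nonneg_left (aux_l2_le_lp n hn0 p hp x) hab
      _ = M * (∑ i, |x i| ^ p) ^ (1/p) := by rw [hM]; ring
  set S : Set ℝ := {r : ℝ | ∃ x : Fin n → ℝ, x ≠ 0 ∧ r = vecPNorm P (A.mulVec x) / vecPNorm P x}
    with hS
  have hub : M ∈ upperBounds S := by
    rintro r ⟨x, hx, rfl⟩
    rw [div_le_iff₀ (hpos x hx)]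
    exact hbound x
  -- the witness vector
  set i0 : Fin n := ⟨0, by omega⟩ with hi0
  set i1 : Fin n := ⟨1, by omega⟩ with hi1
  have hne : i0 ≠ i1 := by simp [hi0, hi1, Fin.ext_iff]
  set z : Fin n → ℝ := fun i => if i = i0 then 1 else if i = i1 then -1 else 0 with hz
  have hz0 : z ≠ 0 := by
    intro h
    have := congrFun h i0
    simp [hz] at this
  have hzsum : ∑ j, z j = 0 := by
    have h : ∀ j : Fin n, z j = (if j = i0 then (1:ℝ) else 0) + (if j = i1 then (-1:ℝ) else 0) := by
      intro j
      by_cases h0 : j = i0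
      · subst h0; simp [hz, hne]
      · by_cases h1 : j = i1 <;> simp [hz, h0, h1, Ne.symm hne]
    rw [Finset.sum_congr rfl fun j _ => h j, Finset.sum_add_distrib,
      Finset.sum_ite_eq' Finset.univ i0 (fun _ => (1:ℝ)),
      Finset.sum_ite_eq' Finset.univ i1 (fun _ => (-1:ℝ))]
    simp
  have hAz : ∀ i, A.mulVec z i = -((a+b) * z i) := by
    intro i
    rw [hA, aux_mulVec_circA, hzsum]
    ring
  have hmem : a + b ∈ S := by
    refine ⟨z, hz0, ?_⟩
    have habs : ∀ i, |A.mulVec z i| = (a+b) * |z i| := by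
      intro i
      rw [hAz i, abs_neg, abs_mul, abs_of_nonneg hab]
    have hNz : vecPNorm P (A.mulVec z) = (a+b) * vecPNorm P z := by
      rw [hvec, hvec]
      have h1 : ∀ i : Fin n, |A.mulVec z i| ^ p = (a+b)^p * |z i| ^ p := by
        intro i
        rw [habs i, Real.mul_rpow hab (abs_nonneg _)]
      rw [Finset.sum_congr rfl fun i _ => h1 i, ← Finset.mul_sum,
        Real.mul_rpow (Real.rpow_nonneg hab _)
          (Finset.sum_nonneg fun i _ => Real.rpow_nonneg (abs_nonneg _) _),
        ← Real.rpow_mul hab, mul_one_div, div_self hp0.ne', Real.rpow_one]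
    rw [hNz, mul_div_assoc, div_self (hpos z hz0).ne', mul_one]
  constructor
  · exact le_csSup ⟨M, hub⟩ hmem
  · exact csSup_le ⟨a + b, hmem⟩ hub
end

section
/- Let a, b ≥ 0 with (n−2)b ≥ 2a, and let A = A(n,-a,b) be the n×n matrix with -a on the diagonal and b elsewhere. For 2 ≤ p < ∞, the induced p-norm of A satisfies (n−1)b − a ≤ ‖A‖_p ≤ n^{1/2 − 1/p}((n−1)b − a). -/
open scoped BigOperators ENNReal
open scoped NNReal
open Finset

/-- two-term rpow subadditivity over ℝ for exponent in (0,1] -/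
lemma my_rpow_add_le_add_rpow {a b t : ℝ} (ha : 0 ≤ a) (hb : 0 ≤ b)
    (ht : 0 ≤ t) (ht1 : t ≤ 1) : (a + b) ^ t ≤ a ^ t + b ^ t := by
  lift a to ℝ≥0 using ha
  lift b to ℝ≥0 using hb
  exact_mod_cast NNReal.rpow_add_le_add_rpow a b ht ht1

lemma my_sum_rpow {ι : Type*} [DecidableEq ι] (s : Finset ι) (f : ι → ℝ)
    (hf : ∀ i ∈ s, 0 ≤ f i) {t : ℝ} (ht : 0 < t) (ht1 : t ≤ 1) :
    (∑ i ∈ s, f i) ^ t ≤ ∑ i ∈ s, f i ^ t := by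
  induction s using Finset.induction with
  | empty => simp [Real.zero_rpow ht.ne']
  | insert a s hnot ih =>
    rw [Finset.sum_insert hnot, Finset.sum_insert hnot]
    have h1 : (f a + ∑ i ∈ s, f i) ^ t ≤ f a ^ t + (∑ i ∈ s, f i) ^ t :=
      my_rpow_add_le_add_rpow (hf a (mem_insert_self a s))
        (Finset.sum_nonneg fun i hi => hf i (mem_insert_of_mem hi)) ht.le ht1
    exact h1.trans (by
      have := ih fun i hi => hf i (mem_insert_of_mem hi)
      linarith)

lemma my_mono {n : ℕ} (y : Fin n → ℝ) {p : ℝ} (hp : 2 ≤ p) :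
    (∑ i, |y i| ^ p) ^ (1/p) ≤ (∑ i, |y i| ^ (2:ℝ)) ^ ((1:ℝ)/2) := by
  have hp0 : 0 < p := by linarith
  have ht : (0:ℝ) < 2/p := by positivity
  have ht1 : 2/p ≤ 1 := by rw [div_le_one hp0]; linarith
  have h := my_sum_rpow Finset.univ (fun i => |y i| ^ p) (fun i _ => by positivity) ht ht1
  have heq : ∀ i : Fin n, (|y i| ^ p) ^ (2/p) = |y i| ^ (2:ℝ) := by
    intro i
    rw [← Real.rpow_mul (abs_nonneg _)]
    congr 1
    field_simp
  simp only [heq] at h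
  have hnn : (0:ℝ) ≤ ∑ i, |y i| ^ p := Finset.sum_nonneg fun i _ => by positivity
  have h2 := Real.rpow_le_rpow (Real.rpow_nonneg hnn _) h (by norm_num : (0:ℝ) ≤ 1/2)
  rw [← Real.rpow_mul hnn] at h2
  have : 2/p * (1/2) = 1/p := by ring
  rwa [this] at h2

lemma my_compare {n : ℕ} (hn : 0 < n) (x : Fin n → ℝ) {p : ℝ} (hp : 2 ≤ p) :
    (∑ i, |x i| ^ (2:ℝ)) ^ ((1:ℝ)/2) ≤
      (n : ℝ) ^ ((1:ℝ)/2 - 1/p) * (∑ i, |x i| ^ p) ^ (1/p) := by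
  have hp0 : 0 < p := by linarith
  have hn0 : (0:ℝ) < n := by exact_mod_cast hn
  set T2 := ∑ i, |x i| ^ (2:ℝ) with hT2
  set Tp := ∑ i, |x i| ^ p with hTp
  have hT2nn : 0 ≤ T2 := Finset.sum_nonneg fun i _ => by positivity
  have hTpnn : 0 ≤ Tp := Finset.sum_nonneg fun i _ => by positivity
  have hr : (1:ℝ) ≤ p/2 := by linarith
  have h := Real.rpow_arith_mean_le_arith_mean_rpow Finset.univ
      (fun _ : Fin n => ((n:ℝ))⁻¹) (fun i => |x i| ^ (2:ℝ))
      (fun i _ => by positivity)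
      (by simp [Finset.sum_const, Finset.card_univ]; field_simp)
      (fun i _ => by positivity) hr
  have heq : ∀ i : Fin n, (|x i| ^ (2:ℝ)) ^ (p/2) = |x i| ^ p := by
    intro i
    rw [← Real.rpow_mul (abs_nonneg _)]
    congr 1
    field_simp
  simp only [heq] at h
  rw [← Finset.mul_sum, ← Finset.mul_sum, ← hT2, ← hTp] at h
  rw [Real.mul_rpow (by positivity) hT2nn] at h
  have h3 : T2 ^ (p/2) ≤ (n:ℝ) ^ (p/2 - 1) * Tp := by
    have hpos : (0:ℝ) < ((n:ℝ))⁻¹ ^ (p/2) := by positivity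
    rw [← le_div_iff₀' hpos] at h
    calc T2 ^ (p/2) ≤ (↑n)⁻¹ * Tp / (↑n)⁻¹ ^ (p/2) := h
      _ = (n:ℝ) ^ (p/2 - 1) * Tp := by
          rw [Real.inv_rpow hn0.le, Real.rpow_sub hn0, Real.rpow_one]
          field_simp
  have h4 := Real.rpow_le_rpow (Real.rpow_nonneg hT2nn _) h3 (by positivity : (0:ℝ) ≤ 1/p)
  rw [← Real.rpow_mul hT2nn] at h4
  have he : p/2 * (1/p) = 1/2 := by field_simp
  rw [he] at h4
  refine h4.trans (le_of_eq ?_)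
  rw [Real.mul_rpow (by positivity) hTpnn, ← Real.rpow_mul hn0.le]
  congr 2
  field_simp

lemma my_mulVec {n : ℕ} (a b : ℝ) (x : Fin n → ℝ) (i : Fin n) :
    (circA n (-a) b).mulVec x i = b * (∑ j, x j) - (a + b) * x i := by
  simp only [Matrix.mulVec, dotProduct, circA, Matrix.of_apply]
  have h : ∀ j : Fin n, (if i = j then -a else b) * x j
      = b * x j - (if i = j then (a + b) * x j else 0) := by
    intro j; split <;> ring
  rw [Finset.sum_congr rfl fun j _ => h j, Finset.sum_sub_distrib,
    Finset.sum_ite_eq, ← Finset.mul_sum]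
  simp

lemma my_rpow_two (y : ℝ) : |y| ^ (2:ℝ) = y ^ 2 := by
  rw [show (2:ℝ) = ((2:ℕ):ℝ) by norm_num, Real.rpow_natCast, sq_abs]

lemma my_spectral {n : ℕ} (hn : 2 ≤ n) {a b : ℝ} (ha : 0 ≤ a) (hb : 0 ≤ b)
    (hcase : 2 * a ≤ ((n : ℝ) - 2) * b) (x : Fin n → ℝ) :
    (∑ i, |(circA n (-a) b).mulVec x i| ^ (2:ℝ)) ^ ((1:ℝ)/2) ≤
      (((n:ℝ) - 1) * b - a) * (∑ i, |x i| ^ (2:ℝ)) ^ ((1:ℝ)/2) := by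
  set C := ((n:ℝ) - 1) * b - a with hC
  have h0 : (0:ℝ) ≤ ((n:ℝ) - 2) * b - 2 * a := by linarith
  have hCnn : 0 ≤ C := by
    have : ((n:ℝ) - 1) * b = ((n:ℝ) - 2) * b + b := by ring
    rw [hC, this]; linarith
  set S := ∑ j, x j with hS
  set T := ∑ j, x j ^ 2 with hT
  have hTnn : 0 ≤ T := Finset.sum_nonneg fun i _ => sq_nonneg _
  have hST : S ^ 2 ≤ (n:ℝ) * T := by
    have := sq_sum_le_card_mul_sum_sq (s := Finset.univ) (f := x)
    simpa [Finset.card_univ] using this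
  simp only [my_mulVec, my_rpow_two]
  have expand : ∑ i, (b * S - (a + b) * x i) ^ 2
      = (n:ℝ) * b^2 * S^2 - 2 * b * (a+b) * S^2 + (a+b)^2 * T := by
    have h : ∀ i : Fin n, (b * S - (a + b) * x i) ^ 2
        = b^2 * S^2 - (2 * b * (a+b) * S) * x i + (a+b)^2 * x i ^ 2 := fun i => by ring
    rw [Finset.sum_congr rfl fun i _ => h i, Finset.sum_add_distrib,
      Finset.sum_sub_distrib, Finset.sum_const, ← Finset.mul_sum, ← Finset.mul_sum,
      Finset.card_univ, Fintype.card_fin, nsmul_eq_mul, ← hS, ← hT]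
    ring
  rw [expand]
  have key : (n:ℝ) * b^2 * S^2 - 2 * b * (a+b) * S^2 + (a+b)^2 * T ≤ C^2 * T := by
    have hk := mul_nonneg (mul_nonneg hb h0) (sub_nonneg.mpr hST)
    rw [hC]
    nlinarith [hk]
  have hexpnn : 0 ≤ (n:ℝ) * b^2 * S^2 - 2 * b * (a+b) * S^2 + (a+b)^2 * T :=
    expand ▸ Finset.sum_nonneg fun i _ => sq_nonneg _
  have h4 := Real.rpow_le_rpow hexpnn key (by norm_num : (0:ℝ) ≤ 1/2)
  refine h4.trans (le_of_eq ?_)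
  rw [Real.mul_rpow (sq_nonneg C) hTnn]
  congr 1
  rw [← Real.rpow_natCast C 2, ← Real.rpow_mul hCnn]
  norm_num

theorem stmt_15 (n : ℕ) (hn : 2 ≤ n) (a b : ℝ) (ha : 0 ≤ a) (hb : 0 ≤ b)
    (hcase : 2 * a ≤ ((n : ℝ) - 2) * b) (p : ℝ) (hp : 2 ≤ p) :
    ((n : ℝ) - 1) * b - a ≤ matPNorm (ENNReal.ofReal p) (circA n (-a) b) ∧
      matPNorm (ENNReal.ofReal p) (circA n (-a) b) ≤
        (n : ℝ) ^ ((1 : ℝ) / 2 - 1 / p) * (((n : ℝ) - 1) * b - a) := by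
  have hp0 : 0 < p := by linarith
  have hn0 : 0 < n := by omega
  have hnR : (0:ℝ) < n := by exact_mod_cast hn0
  set C := ((n:ℝ) - 1) * b - a with hC
  set K := (n:ℝ) ^ ((1:ℝ)/2 - 1/p) with hK
  have hCnn : 0 ≤ C := by
    have h1 : ((n:ℝ) - 1) * b = ((n:ℝ) - 2) * b + b := by ring
    rw [hC, h1]; linarith
  have hKpos : 0 < K := Real.rpow_pos_of_pos hnR _
  have hvec : ∀ x : Fin n → ℝ,
      vecPNorm (ENNReal.ofReal p) x = (∑ i, |x i| ^ p) ^ (1/p) := by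
    intro x
    rw [vecPNorm, if_neg ENNReal.ofReal_ne_top, ENNReal.toReal_ofReal hp0.le]
  set A := circA n (-a) b with hA
  -- key pointwise bound
  have hkey : ∀ x : Fin n → ℝ,
      (∑ i, |A.mulVec x i| ^ p) ^ (1/p) ≤ K * C * (∑ i, |x i| ^ p) ^ (1/p) := by
    intro x
    calc (∑ i, |A.mulVec x i| ^ p) ^ (1/p)
        ≤ (∑ i, |A.mulVec x i| ^ (2:ℝ)) ^ ((1:ℝ)/2) := my_mono _ hp
      _ ≤ C * (∑ i, |x i| ^ (2:ℝ)) ^ ((1:ℝ)/2) := my_spectral hn ha hb hcase x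
      _ ≤ C * (K * (∑ i, |x i| ^ p) ^ (1/p)) :=
          mul_le_mul_of_nonneg_left (my_compare hn0 x hp) hCnn
      _ = K * C * (∑ i, |x i| ^ p) ^ (1/p) := by ring
  have hub : ∀ r ∈ {r : ℝ | ∃ x : Fin n → ℝ, x ≠ 0 ∧
      r = vecPNorm (ENNReal.ofReal p) (A.mulVec x) / vecPNorm (ENNReal.ofReal p) x},
      r ≤ K * C := by
    rintro r ⟨x, hx, rfl⟩
    obtain ⟨i₀, hi₀⟩ := Function.ne_iff.mp hx
    have hxpos : 0 < (∑ i, |x i| ^ p) ^ (1/p) := by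
      apply Real.rpow_pos_of_pos
      exact Finset.sum_pos' (fun i _ => by positivity)
        ⟨i₀, Finset.mem_univ _, Real.rpow_pos_of_pos (abs_pos.mpr hi₀) p⟩
    rw [hvec, hvec, div_le_iff₀ hxpos]
    exact hkey x
  constructor
  · -- lower bound: test vector of all ones
    have hone : (fun _ : Fin n => (1:ℝ)) ≠ 0 := by
      intro h
      have := congrFun h ⟨0, hn0⟩
      norm_num at this
    have hAx : A.mulVec (fun _ => (1:ℝ)) = fun _ => C := by
      funext i
      rw [hA, my_mulVec]
      simp [hC]
      ring
    have hnp : (0:ℝ) < (n:ℝ) ^ (1/p) := Real.rpow_pos_of_pos hnR _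
    have hmem : C ∈ {r : ℝ | ∃ x : Fin n → ℝ, x ≠ 0 ∧
        r = vecPNorm (ENNReal.ofReal p) (A.mulVec x) / vecPNorm (ENNReal.ofReal p) x} := by
      refine ⟨fun _ => 1, hone, ?_⟩
      rw [hvec, hvec, hAx]
      have h1 : (∑ _i : Fin n, |(1:ℝ)| ^ p) = (n:ℝ) := by
        simp [Real.one_rpow]
      have h2 : (∑ _i : Fin n, |C| ^ p) = (n:ℝ) * C ^ p := by
        rw [abs_of_nonneg hCnn]
        simp [Finset.sum_const, Finset.card_univ, nsmul_eq_mul]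
      rw [h1, h2, Real.mul_rpow hnR.le (Real.rpow_nonneg hCnn _),
        ← Real.rpow_mul hCnn, mul_one_div_cancel hp0.ne', Real.rpow_one,
        mul_comm ((n:ℝ) ^ (1/p)) C, mul_div_assoc, div_self hnp.ne', mul_one]
    exact le_csSup ⟨K * C, fun r hr => hub r hr⟩ hmem
  · exact Real.sSup_le hub (by positivity)
end

section
/- Let a, b ≥ 0 with (n−2)b ≥ 2a, and let A = A(n,-a,b) be the n×n matrix with -a on the diagonal and b elsewhere. For 2 ≤ p ≤ ∞, the induced p-norm of A satisfies (n−1)b − a ≤ ‖A‖_p ≤ ((n−1)b−a)^{2/p}·((n−1)b+a)^{1−2/p}. -/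
open scoped BigOperators ENNReal

noncomputable def Complex.abs : AbsoluteValue ℂ ℝ where
  toFun z := ‖z‖
  map_mul' := norm_mul
  nonneg' := norm_nonneg
  eq_zero' _ := norm_eq_zero
  add_le' := norm_add_le

lemma Complex.norm_eq_abs (z : ℂ) : ‖z‖ = Complex.abs z := rfl

lemma Complex.abs_ofReal (r : ℝ) : Complex.abs (r : ℂ) = |r| := by
  rw [← Complex.norm_eq_abs, Complex.norm_real, Real.norm_eq_abs]

lemma Complex.abs_exp (z : ℂ) : Complex.abs (Complex.exp z) = Real.exp z.re :=
  Complex.norm_exp z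

lemma Complex.sq_abs (z : ℂ) : Complex.abs z ^ 2 = Complex.normSq z := Complex.sq_norm z

namespace St18
open Complex HadamardThreeLines

lemma abs_sign {t : ℝ} (ht : t ≠ 0) : |Real.sign t| = 1 := by
  rcases Real.sign_apply_eq_of_ne_zero t ht with h | h <;> rw [h] <;> norm_num

lemma sign_mul_abs (t : ℝ) : Real.sign t * |t| = t := by
  rcases lt_trichotomy t 0 with h | h | h
  · rw [Real.sign_of_neg h, abs_of_neg h]; ring
  · simp [h]
  · rw [Real.sign_of_pos h, abs_of_pos h]; ring

lemma l2R {n : ℕ} (a b : ℝ) (hb : 0 ≤ b)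
    (hcase : 2 * a ≤ ((n : ℝ) - 2) * b) (x : Fin n → ℝ) :
    ∑ i, (b * (∑ j, x j) - (a + b) * x i) ^ 2
      ≤ (((n:ℝ) - 1) * b - a) ^ 2 * ∑ i, (x i) ^ 2 := by
  set S := ∑ j, x j with hS
  have hCS : S ^ 2 ≤ (n : ℝ) * ∑ i, (x i) ^ 2 := by
    simpa using sq_sum_le_card_mul_sum_sq (s := Finset.univ) (f := x)
  have hexp : ∑ i, (b * S - (a + b) * x i) ^ 2
      = (n : ℝ) * (b * S) ^ 2 - 2 * b * (a+b) * S ^ 2 + (a+b)^2 * ∑ i, (x i)^2 := by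
    have : ∀ i, (b * S - (a + b) * x i) ^ 2
        = (b*S)^2 - (2 * b * (a+b) * S) * x i + (a+b)^2 * (x i)^2 := by intro i; ring
    rw [Finset.sum_congr rfl (fun i _ => this i)]
    rw [Finset.sum_add_distrib, Finset.sum_sub_distrib, ← Finset.mul_sum, ← Finset.mul_sum]
    simp [← hS]
    ring
  rw [hexp]
  have hsumsq : 0 ≤ ∑ i, (x i)^2 := Finset.sum_nonneg fun i _ => sq_nonneg _
  have hkey : 0 ≤ b * ((n:ℝ) * b - 2*(a+b)) := by
    apply mul_nonneg hb; nlinarith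
  nlinarith [mul_le_mul_of_nonneg_left hCS hkey]


lemma mulVec_circA {n : ℕ} (a b : ℝ) (x : Fin n → ℝ) (i : Fin n) :
    (circA n (-a) b).mulVec x i
      = b * (∑ j, x j) - (a + b) * x i := by
  simp only [circA, Matrix.mulVec, Matrix.of_apply, dotProduct]
  have : ∀ j, (if i = j then -a else b) * x j
      = b * x j - (if j = i then (a+b) * x j else 0) := by
    intro j
    by_cases h : i = j
    · subst h; simp; ring
    · rw [if_neg h, if_neg (Ne.symm h)]; ring
  rw [Finset.sum_congr rfl (fun j _ => this j), Finset.sum_sub_distrib,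
    Finset.sum_ite_eq' Finset.univ i (fun j => (a+b) * x j)]
  simp [Finset.mul_sum]

lemma l2C {n : ℕ} (a b : ℝ) (hb : 0 ≤ b)
    (hcase : 2 * a ≤ ((n : ℝ) - 2) * b) (v : Fin n → ℂ) :
    ∑ i, Complex.abs ((b:ℂ) * (∑ j, v j) - ((a:ℝ) + b : ℝ) * v i) ^ 2
      ≤ (((n:ℝ) - 1) * b - a) ^ 2 * ∑ i, Complex.abs (v i) ^ 2 := by
  have hre : ∀ i, ((b:ℂ) * (∑ j, v j) - ((a:ℝ) + b : ℝ) * v i).re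
      = b * (∑ j, (v j).re) - (a + b) * (v i).re := by
    intro i
    simp [Complex.mul_re, Complex.sub_re, Complex.re_sum]
  have him : ∀ i, ((b:ℂ) * (∑ j, v j) - ((a:ℝ) + b : ℝ) * v i).im
      = b * (∑ j, (v j).im) - (a + b) * (v i).im := by
    intro i
    simp [Complex.mul_im, Complex.sub_im, Complex.im_sum]
  have habs : ∀ w : ℂ, Complex.abs w ^ 2 = w.re ^ 2 + w.im ^ 2 := by
    intro w; rw [Complex.sq_abs, Complex.normSq_apply]; ring
  calc ∑ i, Complex.abs ((b:ℂ) * (∑ j, v j) - ((a:ℝ) + b : ℝ) * v i) ^ 2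
      = ∑ i, ((b * (∑ j, (v j).re) - (a + b) * (v i).re) ^ 2
          + (b * (∑ j, (v j).im) - (a + b) * (v i).im) ^ 2) := by
        refine Finset.sum_congr rfl fun i _ => ?_
        rw [habs, hre, him]
    _ = (∑ i, (b * (∑ j, (v j).re) - (a + b) * (v i).re) ^ 2)
          + ∑ i, (b * (∑ j, (v j).im) - (a + b) * (v i).im) ^ 2 :=
        Finset.sum_add_distrib
    _ ≤ (((n:ℝ) - 1) * b - a) ^ 2 * (∑ i, ((v i).re) ^ 2)
          + (((n:ℝ) - 1) * b - a) ^ 2 * (∑ i, ((v i).im) ^ 2) :=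
        add_le_add (l2R a b hb hcase _) (l2R a b hb hcase _)
    _ = (((n:ℝ) - 1) * b - a) ^ 2 * ∑ i, Complex.abs (v i) ^ 2 := by
        rw [← mul_add, ← Finset.sum_add_distrib]
        congr 1
        exact (Finset.sum_congr rfl fun i _ => (habs (v i)).symm)


lemma key {n : ℕ} (hn : 2 ≤ n) (a b : ℝ) (ha : 0 ≤ a) (hb : 0 ≤ b)
    (hcase : 2 * a ≤ ((n : ℝ) - 2) * b) (q : ℝ) (hq : 2 ≤ q)
    (x y : Fin n → ℝ) (hx : ∑ j, |x j| ^ q ≤ 1) (hy : ∑ i, |y i| ^ (q/(q-1)) ≤ 1) :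
    |∑ i, y i * (b * (∑ j, x j) - (a + b) * x i)|
      ≤ (((n:ℝ)-1)*b + a) ^ (1 - 2/q) * (((n:ℝ)-1)*b - a) ^ (2/q) := by
  have hq0 : (0:ℝ) < q := by linarith
  have hq1 : (0:ℝ) < q - 1 := by linarith
  set r : ℝ := q / (q - 1) with hr_def
  set θ : ℝ := 2 / q with hθ_def
  have hr0 : 0 < r := div_pos hq0 hq1
  have hθ0 : 0 < θ := by positivity
  have hθ1 : θ ≤ 1 := by rw [hθ_def, div_le_one hq0]; linarith
  set c : ℝ := a + b with hc_def
  have hM2 : (0:ℝ) ≤ ((n:ℝ)-1)*b - a := by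
    have : (2:ℝ) ≤ (n:ℝ) := by exact_mod_cast hn
    nlinarith
  have hMi : (0:ℝ) ≤ ((n:ℝ)-1)*b + a := by
    have : (2:ℝ) ≤ (n:ℝ) := by exact_mod_cast hn
    nlinarith
  set X : ℂ → Fin n → ℂ := fun z j =>
    if x j = 0 then 0 else (Real.sign (x j) : ℂ) *
      Complex.exp (((q/2 * Real.log |x j| : ℝ) : ℂ) * z) with hX_def
  set Y : ℂ → Fin n → ℂ := fun z i =>
    if y i = 0 then 0 else (Real.sign (y i) : ℂ) *
      Complex.exp (((r * Real.log |y i| : ℝ) : ℂ) * (1 - z/2)) with hY_def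
  set φ : ℂ → ℂ := fun z => ∑ i, Y z i * ((b:ℂ) * (∑ j, X z j) - (c:ℂ) * X z i) with hφ_def
  -- absolute values
  have habsX : ∀ (z : ℂ) j, Complex.abs (X z j)
      = if x j = 0 then 0 else |x j| ^ (q/2 * z.re) := by
    intro z j
    by_cases h : x j = 0
    · simp [hX_def, h]
    · simp only [hX_def]
      rw [if_neg h, if_neg h, map_mul, Complex.abs_ofReal, abs_sign h,
        Complex.abs_exp, Real.rpow_def_of_pos (abs_pos.2 h), one_mul]
      congr 1
      simp [Complex.mul_re]
      ring
  have habsY : ∀ (z : ℂ) i, Complex.abs (Y z i)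
      = if y i = 0 then 0 else |y i| ^ (r * (1 - z.re/2)) := by
    intro z i
    by_cases h : y i = 0
    · simp [hY_def, h]
    · simp only [hY_def]
      rw [if_neg h, if_neg h, map_mul, Complex.abs_ofReal, abs_sign h,
        Complex.abs_exp, Real.rpow_def_of_pos (abs_pos.2 h), one_mul]
      congr 1
      simp [Complex.mul_re, Complex.sub_re, Complex.div_re]
      ring
  -- differentiability
  have hXdiff : ∀ j, Differentiable ℂ (fun z => X z j) := by
    intro j
    by_cases h : x j = 0
    · simp only [hX_def, if_pos h]; exact differentiable_const 0
    · simp only [hX_def, if_neg h]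
      exact (differentiable_const _).mul
        (Complex.differentiable_exp.comp ((differentiable_const _).mul differentiable_id))
  have hYdiff : ∀ i, Differentiable ℂ (fun z => Y z i) := by
    intro i
    by_cases h : y i = 0
    · simp only [hY_def, if_pos h]; exact differentiable_const 0
    · simp only [hY_def, if_neg h]
      exact (differentiable_const _).mul
        (Complex.differentiable_exp.comp ((differentiable_const _).mul
          ((differentiable_const _).sub (differentiable_id.div_const 2))))
  have hφdiff : Differentiable ℂ φ := by
    rw [hφ_def]
    apply Differentiable.fun_sum
    intro i _
    exact (hYdiff i).mul
      (((differentiable_const _).mul (Differentiable.fun_sum fun j _ => hXdiff j)).sub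
        ((differentiable_const _).mul (hXdiff i)))
  -- uniform bounds on the strip
  have hXbd : ∀ (z : ℂ), z.re ∈ Set.Icc (0:ℝ) 1 → ∀ j,
      Complex.abs (X z j) ≤ 1 + |x j| ^ (q/2) := by
    intro z hz j
    rw [habsX]
    by_cases h : x j = 0
    · rw [if_pos h]; positivity
    · rw [if_neg h]
      have h1 : (0:ℝ) ≤ q/2 * z.re := by
        apply mul_nonneg (by linarith) hz.1
      rcases le_or_gt (|x j|) 1 with hle | hgt
      · have := Real.rpow_le_one (abs_nonneg _) hle h1
        have h2 : (0:ℝ) ≤ |x j| ^ (q/2) := Real.rpow_nonneg (abs_nonneg _) _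
        linarith
      · have : |x j| ^ (q/2 * z.re) ≤ |x j| ^ (q/2) := by
          apply Real.rpow_le_rpow_of_exponent_le hgt.le
          nlinarith [hz.2]
        linarith
  have hYbd : ∀ (z : ℂ), z.re ∈ Set.Icc (0:ℝ) 1 → ∀ i,
      Complex.abs (Y z i) ≤ 1 + |y i| ^ r := by
    intro z hz i
    rw [habsY]
    by_cases h : y i = 0
    · rw [if_pos h]; positivity
    · rw [if_neg h]
      have h1 : (0:ℝ) ≤ r * (1 - z.re/2) := by
        apply mul_nonneg hr0.le
        nlinarith [hz.2]
      rcases le_or_gt (|y i|) 1 with hle | hgt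
      · have := Real.rpow_le_one (abs_nonneg _) hle h1
        have h2 : (0:ℝ) ≤ |y i| ^ r := Real.rpow_nonneg (abs_nonneg _) _
        linarith
      · have : |y i| ^ (r * (1 - z.re/2)) ≤ |y i| ^ r := by
          apply Real.rpow_le_rpow_of_exponent_le hgt.le
          nlinarith [hz.1, hr0.le]
        linarith
  have hφbd : BddAbove ((norm ∘ φ) '' (verticalClosedStrip 0 1)) := by
    refine ⟨∑ i, (1 + |y i| ^ r) * (b * (∑ j, (1 + |x j| ^ (q/2))) + c * (1 + |x i| ^ (q/2))), ?_⟩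
    rintro w ⟨z, hz, rfl⟩
    have hzre : z.re ∈ Set.Icc (0:ℝ) 1 := hz
    simp only [Function.comp_apply, Complex.norm_eq_abs, hφ_def]
    refine le_trans (IsAbsoluteValue.abv_sum Complex.abs _ _) ?_
    apply Finset.sum_le_sum
    intro i _
    rw [map_mul]
    have hterm : Complex.abs ((b:ℂ) * (∑ j, X z j) - (c:ℂ) * X z i)
        ≤ b * (∑ j, (1 + |x j| ^ (q/2))) + c * (1 + |x i| ^ (q/2)) := by
      refine le_trans (Complex.abs.sub_le_add _ _) ?_
      rw [map_mul, map_mul, Complex.abs_ofReal, Complex.abs_ofReal,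
        _root_.abs_of_nonneg hb, _root_.abs_of_nonneg (by rw [hc_def]; linarith : (0:ℝ) ≤ c)]
      apply add_le_add
      · apply mul_le_mul_of_nonneg_left _ hb
        refine le_trans (IsAbsoluteValue.abv_sum Complex.abs _ _) ?_
        exact Finset.sum_le_sum fun j _ => hXbd z hzre j
      · exact mul_le_mul_of_nonneg_left (hXbd z hzre i) (by rw [hc_def]; linarith)
    refine mul_le_mul (hYbd z hzre i) hterm (Complex.abs.nonneg _) ?_
    positivity
  -- the ℓ∞ bound for the operator applied to vectors with entries of modulus ≤ 1
  have hTbound : ∀ (w : Fin n → ℂ), (∀ j, Complex.abs (w j) ≤ 1) → ∀ i,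
      Complex.abs ((b:ℂ) * (∑ j, w j) - (c:ℂ) * w i) ≤ ((n:ℝ)-1)*b + a := by
    intro w hw i
    have hsplit : (b:ℂ) * (∑ j, w j) - (c:ℂ) * w i
        = (b:ℂ) * (∑ j ∈ Finset.univ.erase i, w j) - (a:ℂ) * w i := by
      rw [← Finset.add_sum_erase _ w (Finset.mem_univ i)]
      have : (c:ℂ) = (a:ℂ) + (b:ℂ) := by rw [hc_def]; push_cast; ring
      rw [this]; ring
    rw [hsplit]
    refine le_trans (Complex.abs.sub_le_add _ _) ?_
    rw [map_mul, map_mul, Complex.abs_ofReal, Complex.abs_ofReal,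
      _root_.abs_of_nonneg hb, _root_.abs_of_nonneg ha]
    have h1 : Complex.abs (∑ j ∈ Finset.univ.erase i, w j) ≤ (n:ℝ) - 1 := by
      refine le_trans (IsAbsoluteValue.abv_sum Complex.abs _ _) ?_
      have hcard : ((Finset.univ.erase i).card : ℝ) = (n:ℝ) - 1 := by
        rw [Finset.card_erase_of_mem (Finset.mem_univ i)]
        simp
        rw [Nat.cast_sub (by omega)]
        simp
      calc ∑ j ∈ Finset.univ.erase i, Complex.abs (w j)
          ≤ ∑ _j ∈ Finset.univ.erase i, (1:ℝ) :=
            Finset.sum_le_sum fun j _ => hw j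
        _ = ((Finset.univ.erase i).card : ℝ) := by simp
        _ = (n:ℝ) - 1 := hcard
    have h2 : Complex.abs (w i) ≤ 1 := hw i
    nlinarith [Complex.abs.nonneg (w i)]
  -- edge re z = 0
  have hedge0 : ∀ z : ℂ, z.re = 0 → Complex.abs (φ z) ≤ ((n:ℝ)-1)*b + a := by
    intro z hz
    have hXone : ∀ j, Complex.abs (X z j) ≤ 1 := by
      intro j
      rw [habsX]
      by_cases h : x j = 0
      · rw [if_pos h]; norm_num
      · rw [if_neg h, hz]
        norm_num
    have hsum : ∀ i, Complex.abs (Y z i) ≤ |y i| ^ r := by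
      intro i
      rw [habsY, hz]
      by_cases h : y i = 0
      · rw [if_pos h]; positivity
      · rw [if_neg h]
        norm_num
    calc Complex.abs (φ z) ≤ ∑ i, Complex.abs (Y z i) *
          Complex.abs ((b:ℂ) * (∑ j, X z j) - (c:ℂ) * X z i) := by
          simp only [hφ_def]
          refine le_trans (IsAbsoluteValue.abv_sum Complex.abs _ _) ?_
          refine le_of_eq (Finset.sum_congr rfl fun i _ => ?_)
          rw [map_mul]
      _ ≤ ∑ i, |y i| ^ r * (((n:ℝ)-1)*b + a) := by
          refine Finset.sum_le_sum fun i _ => ?_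
          exact mul_le_mul (hsum i) (hTbound (X z) hXone i) (Complex.abs.nonneg _)
            (Real.rpow_nonneg (abs_nonneg _) _)
      _ = (∑ i, |y i| ^ r) * (((n:ℝ)-1)*b + a) := by rw [← Finset.sum_mul]
      _ ≤ 1 * (((n:ℝ)-1)*b + a) := by
          exact mul_le_mul_of_nonneg_right hy hMi
      _ = ((n:ℝ)-1)*b + a := one_mul _
  -- edge re z = 1
  have hedge1 : ∀ z : ℂ, z.re = 1 → Complex.abs (φ z) ≤ ((n:ℝ)-1)*b - a := by
    intro z hz
    have hX2 : ∑ j, Complex.abs (X z j) ^ 2 ≤ 1 := by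
      refine le_trans (Finset.sum_le_sum fun j (_ : j ∈ Finset.univ) => ?_) hx
      rw [habsX]
      by_cases h : x j = 0
      · rw [if_pos h]
        norm_num
        positivity
      · rw [if_neg h, hz, mul_one, sq, ← Real.rpow_add (abs_pos.2 h)]
        apply le_of_eq
        congr 1
        ring
    have hY2 : ∑ i, Complex.abs (Y z i) ^ 2 ≤ 1 := by
      refine le_trans (Finset.sum_le_sum fun i (_ : i ∈ Finset.univ) => ?_) hy
      rw [habsY]
      by_cases h : y i = 0
      · rw [if_pos h]
        norm_num
        positivity
      · rw [if_neg h, hz, sq, ← Real.rpow_add (abs_pos.2 h)]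
        apply le_of_eq
        congr 1
        ring
    have hTX : ∑ i, Complex.abs ((b:ℂ) * (∑ j, X z j) - (c:ℂ) * X z i) ^ 2
        ≤ (((n:ℝ)-1)*b - a)^2 := by
      rw [hc_def]
      refine le_trans (l2C a b hb hcase (X z)) ?_
      calc (((n:ℝ) - 1) * b - a) ^ 2 * ∑ i, Complex.abs (X z i) ^ 2
          ≤ (((n:ℝ) - 1) * b - a) ^ 2 * 1 :=
            mul_le_mul_of_nonneg_left hX2 (sq_nonneg _)
        _ = (((n:ℝ)-1)*b - a)^2 := mul_one _
    have h1 : Complex.abs (φ z) ≤ ∑ i, Complex.abs (Y z i) *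
        Complex.abs ((b:ℂ) * (∑ j, X z j) - (c:ℂ) * X z i) := by
      simp only [hφ_def]
      refine le_trans (IsAbsoluteValue.abv_sum Complex.abs _ _) ?_
      refine le_of_eq (Finset.sum_congr rfl fun i _ => ?_)
      rw [map_mul]
    have h2 : (∑ i, Complex.abs (Y z i) *
        Complex.abs ((b:ℂ) * (∑ j, X z j) - (c:ℂ) * X z i)) ^ 2
        ≤ (∑ i, Complex.abs (Y z i) ^ 2) *
          ∑ i, Complex.abs ((b:ℂ) * (∑ j, X z j) - (c:ℂ) * X z i) ^ 2 :=
      Finset.sum_mul_sq_le_sq_mul_sq _ _ _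
    have h3 : (∑ i, Complex.abs (Y z i) *
        Complex.abs ((b:ℂ) * (∑ j, X z j) - (c:ℂ) * X z i)) ^ 2
        ≤ (((n:ℝ)-1)*b - a)^2 := by
      have hTXnn : (0:ℝ) ≤ ∑ i, Complex.abs ((b:ℂ) * (∑ j, X z j) - (c:ℂ) * X z i) ^ 2 :=
        Finset.sum_nonneg fun i _ => sq_nonneg _
      calc _ ≤ (∑ i, Complex.abs (Y z i) ^ 2) *
            ∑ i, Complex.abs ((b:ℂ) * (∑ j, X z j) - (c:ℂ) * X z i) ^ 2 := h2
        _ ≤ 1 * (((n:ℝ)-1)*b - a)^2 := by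
            apply mul_le_mul hY2 hTX hTXnn zero_le_one
        _ = (((n:ℝ)-1)*b - a)^2 := one_mul _
    have hsnn : (0:ℝ) ≤ ∑ i, Complex.abs (Y z i) *
        Complex.abs ((b:ℂ) * (∑ j, X z j) - (c:ℂ) * X z i) :=
      Finset.sum_nonneg (fun i _ => mul_nonneg (Complex.abs.nonneg _) (Complex.abs.nonneg _))
    have hs := Real.sqrt_le_sqrt h3
    rw [Real.sqrt_sq hsnn, Real.sqrt_sq hM2] at hs
    exact le_trans h1 hs
  -- evaluation at θ
  have hXθ : ∀ j, X (θ:ℂ) j = ((x j : ℝ) : ℂ) := by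
    intro j
    by_cases h : x j = 0
    · simp only [hX_def, if_pos h, h]; norm_num
    · simp only [hX_def, if_neg h]
      have hcast : ((q/2 * Real.log |x j| : ℝ) : ℂ) * (θ:ℂ)
          = ((q/2 * Real.log |x j| * θ : ℝ) : ℂ) := by push_cast; ring
      rw [hcast, ← Complex.ofReal_exp, ← Complex.ofReal_mul]
      congr 1
      have hexp : q/2 * Real.log |x j| * θ = Real.log |x j| := by
        rw [hθ_def]
        field_simp
      rw [hexp, Real.exp_log (abs_pos.2 h)]
      exact sign_mul_abs _
  have hYθ : ∀ i, Y (θ:ℂ) i = ((y i : ℝ) : ℂ) := by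
    intro i
    by_cases h : y i = 0
    · simp only [hY_def, if_pos h, h]; norm_num
    · simp only [hY_def, if_neg h]
      have hcast : (1 : ℂ) - (θ:ℂ)/2 = ((1 - θ/2 : ℝ) : ℂ) := by push_cast; ring
      have hcast2 : ((r * Real.log |y i| : ℝ) : ℂ) * ((1 - θ/2 : ℝ) : ℂ)
          = ((r * Real.log |y i| * (1 - θ/2) : ℝ) : ℂ) := by push_cast; ring
      rw [hcast, hcast2, ← Complex.ofReal_exp, ← Complex.ofReal_mul]
      congr 1
      have hexp : r * Real.log |y i| * (1 - θ/2) = Real.log |y i| := by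
        rw [hr_def, hθ_def]
        have hq1' : q - 1 ≠ 0 := ne_of_gt hq1
        field_simp
      rw [hexp, Real.exp_log (abs_pos.2 h)]
      exact sign_mul_abs _
  have hφθ : φ (θ:ℂ) = ((∑ i, y i * (b * (∑ j, x j) - c * x i) : ℝ) : ℂ) := by
    simp only [hφ_def]
    rw [Finset.sum_congr rfl (fun i _ => by rw [hXθ i, hYθ i,
      Finset.sum_congr rfl (fun j _ => hXθ j)])]
    push_cast
    ring
  -- apply Hadamard three lines
  have hθmem : (θ:ℂ) ∈ verticalClosedStrip 0 1 := by
    simp only [verticalClosedStrip, Set.mem_preimage, Complex.ofReal_re, Set.mem_Icc]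
    exact ⟨hθ0.le, hθ1⟩
  have H := Complex.HadamardThreeLines.norm_le_interp_of_mem_verticalClosedStrip₀₁' φ hθmem
    (hφdiff.diffContOnCl) hφbd
    (fun z hz => by
      rw [Complex.norm_eq_abs]
      exact hedge0 z (by simpa using hz))
    (fun z hz => by
      rw [Complex.norm_eq_abs]
      exact hedge1 z (by simpa using hz))
  rw [hφθ] at H
  rw [Complex.norm_real, Real.norm_eq_abs, Complex.ofReal_re] at H
  rw [hc_def] at H
  exact H


lemma sign_mul_self (t : ℝ) : Real.sign t * t = |t| := by
  rcases lt_trichotomy t 0 with h | h | h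
  · rw [Real.sign_of_neg h, abs_of_neg h]; ring
  · simp [h]
  · rw [Real.sign_of_pos h, abs_of_pos h]; ring

lemma dual {n : ℕ} (q : ℝ) (hq : 2 ≤ q) (v : Fin n → ℝ) (C : ℝ) (hC : 0 ≤ C)
    (h : ∀ y : Fin n → ℝ, ∑ i, |y i| ^ (q/(q-1)) ≤ 1 → |∑ i, y i * v i| ≤ C) :
    (∑ i, |v i| ^ q) ^ (1/q) ≤ C := by
  have hq0 : (0:ℝ) < q := by linarith
  have hq1 : (0:ℝ) < q - 1 := by linarith
  have hSnn : (0:ℝ) ≤ ∑ i, |v i| ^ q :=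
    Finset.sum_nonneg fun i _ => Real.rpow_nonneg (abs_nonneg _) _
  rcases eq_or_lt_of_le hSnn with hS0 | hSpos
  · rw [← hS0, Real.zero_rpow (by positivity : (1:ℝ)/q ≠ 0)]
    exact hC
  set N : ℝ := (∑ i, |v i| ^ q) ^ (1/q) with hN_def
  have hNpos : 0 < N := Real.rpow_pos_of_pos hSpos _
  have hNq : N ^ q = ∑ i, |v i| ^ q := by
    rw [hN_def, ← Real.rpow_mul hSnn, one_div_mul_cancel (ne_of_gt hq0), Real.rpow_one]
  have hNqpos : 0 < N ^ q := Real.rpow_pos_of_pos hNpos _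
  set y : Fin n → ℝ := fun i => Real.sign (v i) * |v i| ^ (q-1) / N ^ (q-1) with hy_def
  have habsy : ∀ i, |y i| = |v i| ^ (q-1) / N ^ (q-1) := by
    intro i
    by_cases hv : v i = 0
    · simp [hy_def, hv, Real.sign_zero, Real.zero_rpow (ne_of_gt hq1)]
    · rw [hy_def]
      rw [abs_div, abs_mul, abs_sign hv, one_mul,
        _root_.abs_of_nonneg (Real.rpow_nonneg (abs_nonneg _) _),
        _root_.abs_of_nonneg (Real.rpow_nonneg hNpos.le _)]
  have hy1 : ∑ i, |y i| ^ (q/(q-1)) ≤ 1 := by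
    have hexp : (q-1) * (q/(q-1)) = q := by field_simp
    have heq : ∀ i, |y i| ^ (q/(q-1)) = |v i| ^ q / N ^ q := by
      intro i
      rw [habsy i, Real.div_rpow (Real.rpow_nonneg (abs_nonneg _) _)
        (Real.rpow_nonneg hNpos.le _), ← Real.rpow_mul (abs_nonneg _),
        ← Real.rpow_mul hNpos.le, hexp]
    rw [Finset.sum_congr rfl (fun i _ => heq i), ← Finset.sum_div, ← hNq,
      div_self (ne_of_gt hNqpos)]
  have hsumyv : ∑ i, y i * v i = N := by
    have heq : ∀ i, y i * v i = |v i| ^ q / N ^ (q-1) := by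
      intro i
      by_cases hv : v i = 0
      · simp [hy_def, hv, Real.sign_zero, Real.zero_rpow (ne_of_gt hq0)]
      · rw [hy_def]
        have h1 : Real.sign (v i) * |v i| ^ (q-1) / N ^ (q-1) * v i
            = (|v i| ^ (q-1) * (Real.sign (v i) * v i)) / N ^ (q-1) := by ring
        rw [h1, sign_mul_self]
        congr 1
        calc |v i| ^ (q-1) * |v i| = |v i| ^ (q-1) * |v i| ^ (1:ℝ) := by
              rw [Real.rpow_one]
          _ = |v i| ^ (q - 1 + 1) := (Real.rpow_add (abs_pos.2 hv) _ _).symm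
          _ = |v i| ^ q := by norm_num
    rw [Finset.sum_congr rfl (fun i _ => heq i), ← Finset.sum_div, ← hNq]
    rw [← Real.rpow_sub hNpos]
    norm_num
  have := h y hy1
  rw [hsumyv, _root_.abs_of_nonneg hNpos.le] at this
  exact this


lemma scale {n : ℕ} (q : ℝ) (hq0 : 0 < q) (t : ℝ) (ht : 0 ≤ t) (x : Fin n → ℝ) :
    (∑ j, |t * x j| ^ q) ^ (1/q) = t * (∑ j, |x j| ^ q) ^ (1/q) := by
  have h1 : ∀ j, |t * x j| ^ q = t ^ q * |x j| ^ q := by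
    intro j
    rw [abs_mul, _root_.abs_of_nonneg ht, Real.mul_rpow ht (abs_nonneg _)]
  rw [Finset.sum_congr rfl (fun j _ => h1 j), ← Finset.mul_sum,
    Real.mul_rpow (Real.rpow_nonneg ht _)
      (Finset.sum_nonneg fun j _ => Real.rpow_nonneg (abs_nonneg _) _),
    ← Real.rpow_mul ht, mul_one_div, div_self (ne_of_gt hq0), Real.rpow_one]

-- the ℓ^∞ pointwise bound

lemma linfR {n : ℕ} (hn : 2 ≤ n) (a b : ℝ) (ha : 0 ≤ a) (hb : 0 ≤ b)
    (x : Fin n → ℝ) (N : ℝ) (hN : ∀ j, |x j| ≤ N) (i : Fin n) :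
    |b * (∑ j, x j) - (a + b) * x i| ≤ (((n:ℝ)-1)*b + a) * N := by
  have hN0 : 0 ≤ N := le_trans (abs_nonneg _) (hN i)
  have hsplit : b * (∑ j, x j) - (a + b) * x i
      = b * (∑ j ∈ Finset.univ.erase i, x j) - a * x i := by
    rw [← Finset.add_sum_erase _ x (Finset.mem_univ i)]
    ring
  rw [hsplit]
  have h1 : |∑ j ∈ Finset.univ.erase i, x j| ≤ ((n:ℝ) - 1) * N := by
    refine le_trans (Finset.abs_sum_le_sum_abs _ _) ?_
    have hcard : ((Finset.univ.erase i).card : ℝ) = (n:ℝ) - 1 := by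
      rw [Finset.card_erase_of_mem (Finset.mem_univ i)]
      simp
      rw [Nat.cast_sub (by omega)]
      simp
    calc ∑ j ∈ Finset.univ.erase i, |x j| ≤ ∑ _j ∈ Finset.univ.erase i, N :=
          Finset.sum_le_sum fun j _ => hN j
      _ = ((Finset.univ.erase i).card : ℝ) * N := by
          rw [Finset.sum_const, nsmul_eq_mul]
      _ = ((n:ℝ) - 1) * N := by rw [hcard]
  calc |b * (∑ j ∈ Finset.univ.erase i, x j) - a * x i|
      ≤ |b * (∑ j ∈ Finset.univ.erase i, x j)| + |a * x i| := abs_sub _ _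
    _ = b * |∑ j ∈ Finset.univ.erase i, x j| + a * |x i| := by
        rw [abs_mul, abs_mul, _root_.abs_of_nonneg hb, _root_.abs_of_nonneg ha]
    _ ≤ b * (((n:ℝ) - 1) * N) + a * N := by
        apply add_le_add
        · exact mul_le_mul_of_nonneg_left h1 hb
        · exact mul_le_mul_of_nonneg_left (hN i) ha
    _ = (((n:ℝ)-1)*b + a) * N := by ring

end St18

open St18 in
theorem stmt_18 (n : ℕ) (hn : 2 ≤ n) (a b : ℝ) (ha : 0 ≤ a) (hb : 0 ≤ b)
    (hcase : 2 * a ≤ ((n : ℝ) - 2) * b) (p : ℝ≥0∞) (hp : 2 ≤ p) :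
    ((n : ℝ) - 1) * b - a ≤ matPNorm p (circA n (-a) b) ∧
      matPNorm p (circA n (-a) b) ≤
        (((n : ℝ) - 1) * b - a) ^ (2 / p.toReal) *
          (((n : ℝ) - 1) * b + a) ^ (1 - 2 / p.toReal) := by
  have hn2 : (2:ℝ) ≤ (n:ℝ) := by exact_mod_cast hn
  have hM2 : (0:ℝ) ≤ ((n:ℝ)-1)*b - a := by nlinarith
  have hMi : (0:ℝ) ≤ ((n:ℝ)-1)*b + a := by nlinarith
  have hne : Nonempty (Fin n) := ⟨⟨0, by omega⟩⟩
  set A : Matrix (Fin n) (Fin n) ℝ := circA n (-a) b with hA_def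
  set S : Set ℝ :=
    {r : ℝ | ∃ x : Fin n → ℝ, x ≠ 0 ∧ r = vecPNorm p (A.mulVec x) / vecPNorm p x} with hS_def
  have hmat : matPNorm p A = sSup S := rfl
  -- the ones vector
  set o : Fin n → ℝ := fun _ => (1:ℝ) with ho_def
  have ho : o ≠ 0 := by
    intro h
    have := congrFun h ⟨0, by omega⟩
    simp [ho_def] at this
  have hAo : A.mulVec o = fun _ => ((n:ℝ)-1)*b - a := by
    funext i
    rw [hA_def, mulVec_circA]
    simp [ho_def]
    ring
  by_cases hptop : p = ∞
  · -- p = ∞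
    subst hptop
    have hub : ∀ r ∈ S, r ≤ ((n:ℝ)-1)*b + a := by
      rintro r ⟨x, hx0, rfl⟩
      have hbdd : BddAbove (Set.range fun i => |x i|) :=
        Set.Finite.bddAbove (Set.finite_range _)
      set N : ℝ := ⨆ i, |x i| with hN_def
      have hNge : ∀ j, |x j| ≤ N := fun j => le_ciSup hbdd j
      have hNpos : 0 < N := by
        obtain ⟨j, hj⟩ := Function.ne_iff.1 hx0
        exact lt_of_lt_of_le (abs_pos.2 hj) (hNge j)
      have hvx : vecPNorm ∞ x = N := by rw [vecPNorm, if_pos rfl]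
      have hvAx : vecPNorm ∞ (A.mulVec x) ≤ (((n:ℝ)-1)*b + a) * N := by
        rw [vecPNorm, if_pos rfl]
        apply ciSup_le
        intro i
        rw [hA_def, mulVec_circA]
        exact linfR hn a b ha hb x N hNge i
      rw [hvx, div_le_iff₀ hNpos]
      exact hvAx
    have hmem : ((n:ℝ)-1)*b - a ∈ S := by
      refine ⟨o, ho, ?_⟩
      rw [hAo]
      have h1 : vecPNorm (∞ : ℝ≥0∞) (fun _ => ((n:ℝ)-1)*b - a : Fin n → ℝ)
          = ((n:ℝ)-1)*b - a := by
        rw [vecPNorm, if_pos rfl, ciSup_const, _root_.abs_of_nonneg hM2]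
      have h2 : vecPNorm (∞ : ℝ≥0∞) o = 1 := by
        rw [vecPNorm, if_pos rfl]
        simp [ho_def]
      rw [h1, h2, div_one]
    constructor
    · rw [hmat]
      exact le_csSup ⟨((n:ℝ)-1)*b + a, hub⟩ hmem
    · rw [hmat]
      have : (⊤ : ℝ≥0∞).toReal = 0 := rfl
      rw [this, div_zero, Real.rpow_zero, one_mul, sub_zero, Real.rpow_one]
      exact csSup_le ⟨_, hmem⟩ hub
  · -- p finite
    set q : ℝ := p.toReal with hq_def
    have hq : 2 ≤ q := by
      have := ENNReal.toReal_mono hptop hp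
      simpa using this
    have hq0 : (0:ℝ) < q := by linarith
    set C : ℝ := (((n:ℝ)-1)*b + a) ^ (1 - 2/q) * (((n:ℝ)-1)*b - a) ^ (2/q) with hC_def
    have hC0 : 0 ≤ C :=
      mul_nonneg (Real.rpow_nonneg hMi _) (Real.rpow_nonneg hM2 _)
    have normbound : ∀ x : Fin n → ℝ, (∑ j, |x j| ^ q) ≤ 1 →
        (∑ i, |A.mulVec x i| ^ q) ^ (1/q) ≤ C := by
      intro x hx
      apply dual q hq (A.mulVec x) C hC0
      intro y hy
      have hkey := key hn a b ha hb hcase q hq x y hx hy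
      have hrw : ∑ i, y i * A.mulVec x i
          = ∑ i, y i * (b * (∑ j, x j) - (a + b) * x i) := by
        refine Finset.sum_congr rfl fun i _ => ?_
        rw [hA_def, mulVec_circA]
      rw [hrw]
      rw [hC_def]
      exact hkey
    have hratio : ∀ x : Fin n → ℝ, x ≠ 0 →
        vecPNorm p (A.mulVec x) ≤ C * vecPNorm p x := by
      intro x hx0
      have hS0pos : 0 < ∑ j, |x j| ^ q := by
        obtain ⟨j, hj⟩ := Function.ne_iff.1 hx0
        apply Finset.sum_pos' (fun i _ => Real.rpow_nonneg (abs_nonneg _) _)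
        exact ⟨j, Finset.mem_univ j, Real.rpow_pos_of_pos (abs_pos.2 hj) _⟩
      set N : ℝ := (∑ j, |x j| ^ q) ^ (1/q) with hN_def
      have hNpos : 0 < N := Real.rpow_pos_of_pos hS0pos _
      have hNq : N ^ q = ∑ j, |x j| ^ q := by
        rw [hN_def, ← Real.rpow_mul hS0pos.le, one_div_mul_cancel (ne_of_gt hq0),
          Real.rpow_one]
      set x' : Fin n → ℝ := fun j => N⁻¹ * x j with hx'_def
      have hx'1 : ∑ j, |x' j| ^ q ≤ 1 := by
        have h1 : ∀ j, |x' j| ^ q = (N ^ q)⁻¹ * |x j| ^ q := by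
          intro j
          rw [hx'_def, abs_mul, _root_.abs_of_nonneg (inv_nonneg.2 hNpos.le),
            Real.mul_rpow (inv_nonneg.2 hNpos.le) (abs_nonneg _),
            Real.inv_rpow hNpos.le]
        rw [Finset.sum_congr rfl fun j _ => h1 j, ← Finset.mul_sum, ← hNq]
        rw [inv_mul_cancel₀ (ne_of_gt (Real.rpow_pos_of_pos hNpos q))]
      have hAx' : ∀ i, A.mulVec x' i = N⁻¹ * A.mulVec x i := by
        intro i
        rw [hA_def, mulVec_circA, mulVec_circA]
        simp only [hx'_def]
        rw [← Finset.mul_sum]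
        ring
      have hb1 := normbound x' hx'1
      have hlhs : (∑ i, |A.mulVec x' i| ^ q) ^ (1/q)
          = N⁻¹ * (∑ i, |A.mulVec x i| ^ q) ^ (1/q) := by
        rw [Finset.sum_congr rfl fun i _ => by rw [hAx' i]]
        exact scale q hq0 N⁻¹ (inv_nonneg.2 hNpos.le) _
      rw [hlhs] at hb1
      have hvAx : vecPNorm p (A.mulVec x) = (∑ i, |A.mulVec x i| ^ q) ^ (1/q) := by
        rw [vecPNorm, if_neg hptop]
      have hvx : vecPNorm p x = N := by rw [vecPNorm, if_neg hptop]
      rw [hvAx, hvx]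
      rw [inv_mul_le_iff₀ hNpos] at hb1
      linarith [hb1]
    have hub : ∀ r ∈ S, r ≤ C := by
      rintro r ⟨x, hx0, rfl⟩
      have hS0pos : 0 < ∑ j, |x j| ^ q := by
        obtain ⟨j, hj⟩ := Function.ne_iff.1 hx0
        apply Finset.sum_pos' (fun i _ => Real.rpow_nonneg (abs_nonneg _) _)
        exact ⟨j, Finset.mem_univ j, Real.rpow_pos_of_pos (abs_pos.2 hj) _⟩
      have hvxpos : 0 < vecPNorm p x := by
        rw [vecPNorm, if_neg hptop]
        exact Real.rpow_pos_of_pos hS0pos _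
      rw [div_le_iff₀ hvxpos]
      exact hratio x hx0
    have hmem : ((n:ℝ)-1)*b - a ∈ S := by
      refine ⟨o, ho, ?_⟩
      rw [hAo]
      have h1 : vecPNorm p (fun _ => ((n:ℝ)-1)*b - a : Fin n → ℝ)
          = (((n:ℝ)-1)*b - a) * vecPNorm p o := by
        rw [vecPNorm, vecPNorm, if_neg hptop, if_neg hptop]
        calc (∑ _i : Fin n, |((n:ℝ)-1)*b - a| ^ p.toReal) ^ (1/p.toReal)
            = (∑ i, |(((n:ℝ)-1)*b - a) * o i| ^ p.toReal) ^ (1/p.toReal) := by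
              simp [ho_def]
          _ = (((n:ℝ)-1)*b - a) * (∑ i, |o i| ^ p.toReal) ^ (1/p.toReal) :=
              scale q hq0 _ hM2 o
      have hvopos : 0 < vecPNorm p o := by
        rw [vecPNorm, if_neg hptop]
        apply Real.rpow_pos_of_pos
        apply Finset.sum_pos' (fun i _ => Real.rpow_nonneg (abs_nonneg _) _)
        exact ⟨⟨0, by omega⟩, Finset.mem_univ _, by
          simp [ho_def]⟩
      rw [h1, mul_div_assoc, div_self (ne_of_gt hvopos), mul_one]
    constructor
    · rw [hmat]
      exact le_csSup ⟨C, hub⟩ hmem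
    · rw [hmat]
      have : (((n:ℝ)-1)*b - a) ^ (2/q) * (((n:ℝ)-1)*b + a) ^ (1 - 2/q) = C := by
        rw [hC_def]; ring
      rw [this]
      exact csSup_le ⟨_, hmem⟩ hub
end
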